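/- Let (R, m) be a Noetherian local ring. Then m = tr_R(m) fails precisely when m is generated by a single non-zerodivisor of R. -/

import Mathlib

/-- The trace ideal of an `R`-module `M`. -/
def traceIdeal (R : Type*) [CommRing R] (M : Type*) [AddCommGroup M] [Module R M] : Ideal R :=
  ⨆ f : M →ₗ[R] R, LinearMap.range f

lemma maximalIdeal_le_traceIdeal (R : Type*) [CommRing R] [IsLocalRing R] :
    IsLocalRing.maximalIdeal R ≤ traceIdeal R (IsLocalRing.maximalIdeal R) := by
  intro y hy
  exact (le_iSup (fun f : (IsLocalRing.maximalIdeal R : Submodule R R) →ₗ[R] R =>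
    LinearMap.range f) (Submodule.subtype _)) ⟨⟨y, hy⟩, rfl⟩

/-- For a Noetherian local ring `(R, m)`, `m = tr_R(m)` fails precisely when `m` is
generated by a single non-zerodivisor of `R`. -/
theorem maximalIdeal_traceIdeal_ne_iff_principal_nzd (R : Type*) [CommRing R]
    [IsNoetherianRing R] [IsLocalRing R] :
    traceIdeal R (IsLocalRing.maximalIdeal R) ≠ IsLocalRing.maximalIdeal R ↔
      ∃ a : R, a ∈ nonZeroDivisors R ∧ IsLocalRing.maximalIdeal R = Ideal.span {a} := by
  set m := IsLocalRing.maximalIdeal R with hm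
  constructor
  · intro h
    -- there exist f and x with f x a unit
    have hex : ∃ (f : (m : Submodule R R) →ₗ[R] R) (x : m), f x ∉ m := by
      by_contra hall
      push_neg at hall
      apply h
      refine le_antisymm ?_ (maximalIdeal_le_traceIdeal R)
      refine iSup_le fun f => ?_
      rintro _ ⟨x, rfl⟩
      exact hall f x
    obtain ⟨f, x, hfx⟩ := hex
    have hunit : IsUnit (f x) := by
      by_contra hnu
      exact hfx (IsLocalRing.mem_maximalIdeal _ |>.mpr hnu)
    obtain ⟨u, hu⟩ := hunit
    refine ⟨(x : R), ?_, ?_⟩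
    · rw [mem_nonZeroDivisors_iff_right]
      intro z hz
      have h1 : z • x = (0 : m) := by
        apply Subtype.ext
        simpa [smul_eq_mul] using hz
      have h2 : z * f x = 0 := by
        have := f.map_smul z x
        rw [h1] at this
        simpa [smul_eq_mul] using this.symm
      calc z = z * f x * ↑u⁻¹ := by rw [← hu, mul_assoc, Units.mul_inv, mul_one]
        _ = 0 := by rw [h2, zero_mul]
    · ext y
      simp only [Ideal.mem_span_singleton]
      constructor
      · intro hy
        -- key swap identity
        have key : (x : R) * f ⟨y, hy⟩ = y * f x := by
          have h1 : ((x : R) • (⟨y, hy⟩ : m)) = (y • x : m) := by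
            apply Subtype.ext
            simp [smul_eq_mul, mul_comm]
          have h2 := f.map_smul (x : R) ⟨y, hy⟩
          rw [h1, f.map_smul] at h2
          simpa [smul_eq_mul] using h2.symm
        refine ⟨f ⟨y, hy⟩ * ↑u⁻¹, ?_⟩
        rw [← mul_assoc, key, ← hu, mul_assoc, Units.mul_inv, mul_one]
      · rintro ⟨c, rfl⟩
        exact Ideal.mul_mem_right _ _ x.2
  · rintro ⟨a, ha, hspan⟩
    -- build f : m →ₗ R hitting 1
    set φ := LinearMap.toSpanSingleton R R a with hφ
    have hinj : Function.Injective φ := by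
      intro r s hrs
      simp only [hφ, LinearMap.toSpanSingleton_apply, smul_eq_mul] at hrs
      exact (mul_cancel_right_mem_nonZeroDivisors ha).mp hrs
    have hrange : LinearMap.range φ = m := by
      rw [← LinearMap.span_singleton_eq_range, ← Ideal.span, ← hspan]
    set e := LinearEquiv.ofInjective φ hinj with he
    set f : (m : Submodule R R) →ₗ[R] R :=
      e.symm.toLinearMap ∘ₗ (LinearEquiv.ofEq m (LinearMap.range φ) hrange.symm).toLinearMap
      with hf
    have haM : a ∈ m := by rw [hspan]; exact Ideal.mem_span_singleton_self a
    have hfa : f ⟨a, haM⟩ = 1 := by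
      have h1 : e 1 = ⟨a, by rw [hrange]; exact haM⟩ := by
        apply Subtype.ext
        simp [he, hφ]
      have : (LinearEquiv.ofEq m (LinearMap.range φ) hrange.symm) ⟨a, haM⟩ =
          ⟨a, by rw [hrange]; exact haM⟩ := rfl
      simp only [hf, LinearMap.coe_comp, Function.comp_apply, LinearEquiv.coe_coe, this,
        ← h1, LinearEquiv.symm_apply_apply]
    have hone : (1 : R) ∈ traceIdeal R m := by
      have : (1 : R) ∈ LinearMap.range f := ⟨⟨a, haM⟩, hfa⟩
      exact (le_iSup (fun g : (m : Submodule R R) →ₗ[R] R => LinearMap.range g) f) this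
    intro heq
    rw [heq] at hone
    exact (IsLocalRing.maximalIdeal.isMaximal R).ne_top ((Ideal.eq_top_iff_one m).mpr hone)
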